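/- Let P be a partially ordered set, C a cocomplete category, and M : P → C any functor. Let ι : P → Down(P) be the monotone map sending p to the principal down set D_p = {q ∈ P | q ≤ p}. Then the pointwise left Kan extension ι_*M = Lan_ι M : Down(P) → C is a basic cosheaf: for every down set S ∈ Down(P) and every basic cover U of S, the canonical map colim_{U ∈ U} (ι_*M)(U) → (ι_*M)(S) is an isomorphism. -/

import Mathlib

open CategoryTheory Limits

universe v u

variable {P : Type v} [PartialOrder P]

/-- The monotone map `ι : P → Down(P)` sending `p` to the principal down set
`D_p = {q | q ≤ p}`. -/
def principalIota (P : Type v) [PartialOrder P] : P →o LowerSet P :=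
  ⟨fun p => LowerSet.Iic p, fun _ _ h _ hx => le_trans hx h⟩

/-- A basic cover of a down set `S`: a family of down sets whose union is `S` and such that
the intersection of any two members is a union of members of the family. -/
def IsBasicCover (S : LowerSet P) (U : Set (LowerSet P)) : Prop :=
  sSup U = S ∧ ∀ V₁ ∈ U, ∀ V₂ ∈ U, ∃ W ⊆ U, sSup W = V₁ ⊓ V₂

/-- The inclusion of the full subposet of `Down(P)` spanned by a family `U` of down sets. -/
def coverInclusion (U : Set (LowerSet P)) : (↥U) ⥤ LowerSet P :=
  (⟨fun V => (V : LowerSet P), fun _ _ h => h⟩ : ↥U →o LowerSet P).monotone.functor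

/-- The canonical cocone on the restriction of `F : Down(P) ⥤ C` to a family of down sets
contained in `S`, with apex `F(S)`. -/
def coverCocone {C : Type u} [Category.{v} C] (F : LowerSet P ⥤ C) (S : LowerSet P)
    (U : Set (LowerSet P)) (hle : ∀ V ∈ U, V ≤ S) :
    Cocone (coverInclusion U ⋙ F) where
  pt := F.obj S
  ι :=
    { app := fun V => F.map (homOfLE (hle V.1 V.2))
      naturality := fun _ _ _ => by
        dsimp [coverInclusion, Monotone.functor]
        rw [Category.comp_id, ← F.map_comp]
        exact congrArg F.map (Subsingleton.elim _ _) }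

section Aux

/-- Membership from a hom out of a principal down set. -/
lemma mem_of_hom {p : P} {V : LowerSet P}
    (f : (principalIota P).monotone.functor.obj p ⟶ V) : p ∈ V :=
  leOfHom f (LowerSet.mem_Iic_iff.2 le_rfl)

/-- Hom from a principal down set given membership. -/
def canHom {p : P} {V : LowerSet P} (hp : p ∈ V) :
    (principalIota P).monotone.functor.obj p ⟶ V :=
  homOfLE (LowerSet.Iic_le.2 hp)

variable {C : Type u} [Category.{v} C] [HasColimits C]

/-- The canonical map `M p ⟶ (ι_* M)(V)` when `p ∈ V`. -/
noncomputable def canMap (M : P ⥤ C) {p : P} {V : LowerSet P} (hp : p ∈ V) :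
    M.obj p ⟶ ((principalIota P).monotone.functor.lan.obj M).obj V :=
  ((principalIota P).monotone.functor.lanUnit.app M).app p ≫
    ((principalIota P).monotone.functor.lan.obj M).map (canHom hp)

lemma canMap_comp (M : P ⥤ C) {p : P} {V W : LowerSet P} (hp : p ∈ V) (f : V ⟶ W) :
    canMap M hp ≫ ((principalIota P).monotone.functor.lan.obj M).map f
      = canMap M (leOfHom f hp) := by
  simp only [canMap, Category.assoc, ← Functor.map_comp]
  congr 1

lemma map_canMap (M : P ⥤ C) {p q : P} (f : p ⟶ q) {V : LowerSet P} (hq : q ∈ V) :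
    M.map f ≫ canMap M hq = canMap M (V.lower (leOfHom f) hq) := by
  simp only [canMap, ← Category.assoc]
  rw [show M.map f ≫ ((principalIota P).monotone.functor.lanUnit.app M).app q
      = ((principalIota P).monotone.functor.lanUnit.app M).app p ≫
        ((principalIota P).monotone.functor ⋙
          (principalIota P).monotone.functor.lan.obj M).map f from
    ((principalIota P).monotone.functor.lanUnit.app M).naturality f]
  simp only [Functor.comp_map, Category.assoc, ← Functor.map_comp]
  congr 1

lemma coconeAt_ι_eq (M : P ⥤ C) (S : LowerSet P)
    (g : CostructuredArrow (principalIota P).monotone.functor S) :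
    ((Functor.LeftExtension.mk _ ((principalIota P).monotone.functor.lanUnit.app M)).coconeAt
        S).ι.app g = canMap M (mem_of_hom g.hom) := by
  dsimp [Functor.LeftExtension.coconeAt, canMap]
  congr 1

lemma canMap_cocone_mono (M : P ⥤ C) {U : Set (LowerSet P)}
    (c : Cocone (coverInclusion U ⋙ (principalIota P).monotone.functor.lan.obj M))
    {p : P} {V W : LowerSet P} (hV : V ∈ U) (hW : W ∈ U) (hVW : V ≤ W) (hp : p ∈ V) :
    canMap M hp ≫ c.ι.app ⟨V, hV⟩ = canMap M (hVW hp) ≫ c.ι.app ⟨W, hW⟩ := by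
  have h := c.ι.naturality (homOfLE (show (⟨V, hV⟩ : ↥U) ≤ ⟨W, hW⟩ from hVW))
  have h2 : (coverInclusion U ⋙ (principalIota P).monotone.functor.lan.obj M).map
      (homOfLE (show (⟨V, hV⟩ : ↥U) ≤ ⟨W, hW⟩ from hVW)) ≫ c.ι.app ⟨W, hW⟩
      = c.ι.app ⟨V, hV⟩ := by
    rw [h]; exact Category.comp_id _
  rw [← h2]
  refine (Category.assoc _ _ _).symm.trans ?_
  congr 1
  exact canMap_comp M hp ((coverInclusion U).map
    (homOfLE (show (⟨V, hV⟩ : ↥U) ≤ ⟨W, hW⟩ from hVW)))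

lemma canMap_cocone_indep (M : P ⥤ C) {U : Set (LowerSet P)}
    (hint : ∀ V₁ ∈ U, ∀ V₂ ∈ U, ∃ W ⊆ U, sSup W = V₁ ⊓ V₂)
    (c : Cocone (coverInclusion U ⋙ (principalIota P).monotone.functor.lan.obj M))
    {p : P} {V₁ V₂ : LowerSet P} (h₁ : V₁ ∈ U) (h₂ : V₂ ∈ U)
    (hp₁ : p ∈ V₁) (hp₂ : p ∈ V₂) :
    canMap M hp₁ ≫ c.ι.app ⟨V₁, h₁⟩ = canMap M hp₂ ≫ c.ι.app ⟨V₂, h₂⟩ := by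
  obtain ⟨W, hWU, hWeq⟩ := hint V₁ h₁ V₂ h₂
  have hpW : p ∈ sSup W := by
    rw [hWeq]; exact LowerSet.mem_inf_iff.2 ⟨hp₁, hp₂⟩
  obtain ⟨W₀, hW₀W, hpW₀⟩ := LowerSet.mem_sSup_iff.1 hpW
  have hW₀ : W₀ ≤ V₁ ⊓ V₂ := hWeq ▸ le_sSup hW₀W
  have e1 := canMap_cocone_mono M c (hWU hW₀W) h₁ (hW₀.trans inf_le_left) hpW₀
  have e2 := canMap_cocone_mono M c (hWU hW₀W) h₂ (hW₀.trans inf_le_right) hpW₀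
  exact e1.symm.trans e2

/-- The cocone on `M` over the costructured arrow category obtained by descending a cocone on
the restriction of `ι_* M` to the cover. -/
noncomputable def descCocone (M : P ⥤ C) (S : LowerSet P) (U : Set (LowerSet P))
    (hint : ∀ V₁ ∈ U, ∀ V₂ ∈ U, ∃ W ⊆ U, sSup W = V₁ ⊓ V₂)
    (hcov : ∀ p ∈ S, ∃ V ∈ U, p ∈ V)
    (c : Cocone (coverInclusion U ⋙ (principalIota P).monotone.functor.lan.obj M)) :
    Cocone (CostructuredArrow.proj (principalIota P).monotone.functor S ⋙ M) where
  pt := c.pt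
  ι :=
    { app := fun g =>
        canMap M (hcov g.left (mem_of_hom g.hom)).choose_spec.2 ≫
          c.ι.app ⟨(hcov g.left (mem_of_hom g.hom)).choose,
            (hcov g.left (mem_of_hom g.hom)).choose_spec.1⟩
      naturality := fun g₁ g₂ f => by
        dsimp
        rw [Category.comp_id]
        exact (Category.assoc _ _ _).symm.trans ((map_canMap M _ _ =≫ _).trans (canMap_cocone_indep M hint c _ _ _ _)) }

/-- The cover cocone on the left Kan extension is a colimit cocone. -/
noncomputable def coverCoconeIsColimit (M : P ⥤ C) (S : LowerSet P) (U : Set (LowerSet P))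
    (hsup : sSup U = S)
    (hint : ∀ V₁ ∈ U, ∀ V₂ ∈ U, ∃ W ⊆ U, sSup W = V₁ ⊓ V₂)
    (hle : ∀ V ∈ U, V ≤ S) :
    IsColimit (coverCocone ((principalIota P).monotone.functor.lan.obj M) S U hle) := by
  have hcov : ∀ p ∈ S, ∃ V ∈ U, p ∈ V := by
    intro p hp
    rw [← hsup] at hp
    exact LowerSet.mem_sSup_iff.1 hp
  have hPW := Functor.isPointwiseLeftKanExtensionOfIsLeftKanExtension
    (F := M) _ ((principalIota P).monotone.functor.lanUnit.app M)
  have hES : IsColimit ((Functor.LeftExtension.mk _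
      ((principalIota P).monotone.functor.lanUnit.app M)).coconeAt S) := hPW S
  have hEV : ∀ V : LowerSet P, IsColimit ((Functor.LeftExtension.mk _
      ((principalIota P).monotone.functor.lanUnit.app M)).coconeAt V) := fun V => hPW V
  refine
    { desc := fun c => hES.desc (descCocone M S U hint hcov c)
      fac := fun c V => ?_
      uniq := fun c m hm => ?_ }
  · apply (hEV V.1).hom_ext
    intro g
    rw [coconeAt_ι_eq]
    have hpV : g.left ∈ V.1 := mem_of_hom g.hom
    have hpS : g.left ∈ S := hle V.1 V.2 hpV
    -- LHS
    have hfac := hES.fac (descCocone M S U hint hcov c) (CostructuredArrow.mk (canHom hpS))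
    rw [coconeAt_ι_eq] at hfac
    have lhs : canMap M hpV ≫ (coverCocone ((principalIota P).monotone.functor.lan.obj M)
        S U hle).ι.app V ≫ hES.desc (descCocone M S U hint hcov c)
        = canMap M hpS ≫ hES.desc (descCocone M S U hint hcov c) := by
      refine (Category.assoc _ _ _).symm.trans ?_
      congr 1
      exact canMap_comp M hpV _
    refine lhs.trans (hfac.trans ?_)
    dsimp [descCocone]
    exact canMap_cocone_indep M hint c _ _ _ _
  · apply hES.hom_ext
    intro g
    refine Eq.trans ?_ (hES.fac (descCocone M S U hint hcov c) g).symm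
    refine (coconeAt_ι_eq M S g =≫ m).trans ?_
    have hpS : g.left ∈ S := mem_of_hom g.hom
    set V := (hcov g.left hpS).choose with hVdef
    have hVU : V ∈ U := (hcov g.left hpS).choose_spec.1
    have hpV : g.left ∈ V := (hcov g.left hpS).choose_spec.2
    have hsplit : canMap M hpS
        = canMap M hpV ≫ ((principalIota P).monotone.functor.lan.obj M).map
            (homOfLE (hle V hVU)) := by
      rw [canMap_comp]
    refine (hsplit =≫ m).trans ?_
    refine ((Category.assoc _ _ _).trans (canMap M hpV ≫= hm ⟨V, hVU⟩)).trans ?_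
    rfl

end Aux

/-- The left Kan extension `ι_*M` of any `P`-module `M` along `ι : P → Down(P)` is a basic
cosheaf: for every down set `S` and every basic cover `U` of `S`, the canonical map
`colim_{V ∈ U} (ι_*M)(V) → (ι_*M)(S)` is an isomorphism. -/
theorem lan_principal_isBasicCosheaf {C : Type u} [Category.{v} C] [HasColimits C]
    (M : P ⥤ C) (S : LowerSet P) (U : Set (LowerSet P)) (hU : IsBasicCover S U) :
    IsIso
      (colimit.desc (coverInclusion U ⋙ (principalIota P).monotone.functor.lan.obj M)
        (coverCocone ((principalIota P).monotone.functor.lan.obj M) S U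
          (fun V hV => hU.1 ▸ le_sSup hV))) := by
  have hc := coverCoconeIsColimit M S U hU.1 hU.2 (fun V hV => hU.1 ▸ le_sSup hV)
  have heq : colimit.desc (coverInclusion U ⋙ (principalIota P).monotone.functor.lan.obj M)
      (coverCocone ((principalIota P).monotone.functor.lan.obj M) S U
        (fun V hV => hU.1 ▸ le_sSup hV))
      = ((colimit.isColimit _).coconePointUniqueUpToIso hc).hom := by
    apply colimit.hom_ext
    intro j
    simp
  rw [heq]
  infer_instance
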